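/- For every spin configuration σ, the expected number of spin-flips in one update of the SCA dynamics equals E^SCA_{β,q}[|D_{σ,X_σ}|] = Σ_{x∈V} (e^{β·h̃_x(σ)·σ_x + 2q} + 1)^{−1}. -/

import Mathlib

open Finset Real

variable {V : Type*}

/-- The real value (`±1`) of a spin `σ x ∈ ℤˣ = {±1}`. -/
def sp (σ : V → ℤˣ) (x : V) : ℝ := ((σ x : ℤ) : ℝ)

variable [Fintype V] [DecidableEq V]

/-- The Ising Hamiltonian
`H(σ) = -(1/2)·Σ_{x,y} J_{x,y} σ_x σ_y - Σ_x h_x σ_x`. -/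
noncomputable def Ham (J : V → V → ℝ) (h : V → ℝ) (σ : V → ℤˣ) : ℝ :=
  -(1 / 2) * ∑ x, ∑ y, J x y * sp σ x * sp σ y - ∑ x, h x * sp σ x

/-- The symmetrized Hamiltonian
`H̃(σ,τ) = -(1/2)·Σ_{x,y} J_{x,y} σ_x τ_y - (1/2)·Σ_x h_x (σ_x + τ_x)`. -/
noncomputable def Ham2 (J : V → V → ℝ) (h : V → ℝ) (σ τ : V → ℤˣ) : ℝ :=
  -(1 / 2) * ∑ x, ∑ y, J x y * sp σ x * sp τ y - (1 / 2) * ∑ x, h x * (sp σ x + sp τ x)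

/-- The cavity field `h̃_x(σ) = Σ_y J_{x,y} σ_y + h_x`. -/
noncomputable def cavity (J : V → V → ℝ) (h : V → ℝ) (σ : V → ℤˣ) (x : V) : ℝ :=
  ∑ y, J x y * sp σ y + h x

/-- The Boltzmann weight `w^G_β(σ) = e^{-β H(σ)}`. -/
noncomputable def wG (J : V → V → ℝ) (h : V → ℝ) (β : ℝ) (σ : V → ℤˣ) : ℝ :=
  Real.exp (-β * Ham J h σ)

/-- The Gibbs distribution `π^G_β(σ) = w^G_β(σ) / Σ_τ w^G_β(τ)`. -/
noncomputable def piG (J : V → V → ℝ) (h : V → ℝ) (β : ℝ) (σ : V → ℤˣ) : ℝ :=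
  wG J h β σ / ∑ τ : V → ℤˣ, wG J h β τ

/-- `spinFlip σ x` is the configuration `σ^x`, i.e. `σ` with the spin at `x` flipped. -/
def spinFlip (σ : V → ℤˣ) (x : V) : V → ℤˣ := Function.update σ x (-(σ x))

/-- The Glauber transition probability to the one-spin-flipped configuration:
`P^G_β(σ, σ^x) = (1/|V|) · w^G_β(σ^x) / (w^G_β(σ) + w^G_β(σ^x))`. -/
noncomputable def PGflip (J : V → V → ℝ) (h : V → ℝ) (β : ℝ) (σ : V → ℤˣ) (x : V) : ℝ :=
  (1 / (Fintype.card V : ℝ)) * (wG J h β (spinFlip σ x) / (wG J h β σ + wG J h β (spinFlip σ x)))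

/-- The full Glauber transition probability: `P^G_β(σ,σ^x)` to a one-spin-flipped
configuration, `1 - Σ_x P^G_β(σ,σ^x)` for staying, and `0` otherwise. -/
noncomputable def PG (J : V → V → ℝ) (h : V → ℝ) (β : ℝ) (σ τ : V → ℤˣ) : ℝ :=
  if τ = σ then 1 - ∑ x, PGflip J h β σ x
  else ∑ x ∈ Finset.univ.filter (fun x => τ = spinFlip σ x), PGflip J h β σ x

/-- The SCA weight `w^SCA_{β,q}(σ) = Σ_τ exp(-β H̃(σ,τ) + q Σ_x σ_x τ_x)`. -/
noncomputable def wSCA (J : V → V → ℝ) (h : V → ℝ) (β q : ℝ) (σ : V → ℤˣ) : ℝ :=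
  ∑ τ : V → ℤˣ, Real.exp (-β * Ham2 J h σ τ + q * ∑ x, sp σ x * sp τ x)

/-- The SCA transition probability
`P^SCA_{β,q}(σ,τ) = exp(-β H̃(σ,τ) + q Σ_x σ_x τ_x) / w^SCA_{β,q}(σ)`. -/
noncomputable def PSCA (J : V → V → ℝ) (h : V → ℝ) (β q : ℝ) (σ τ : V → ℤˣ) : ℝ :=
  Real.exp (-β * Ham2 J h σ τ + q * ∑ x, sp σ x * sp τ x) / wSCA J h β q σ

/-- The SCA equilibrium distribution `π^SCA_{β,q}(σ) = w^SCA_{β,q}(σ) / Σ_τ w^SCA_{β,q}(τ)`. -/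
noncomputable def piSCA (J : V → V → ℝ) (h : V → ℝ) (β q : ℝ) (σ : V → ℤˣ) : ℝ :=
  wSCA J h β q σ / ∑ τ : V → ℤˣ, wSCA J h β q τ

/-- The disagreement set `D_{σ,τ} = {x ∈ V : σ_x ≠ τ_x}`. -/
def Dset (σ τ : V → ℤˣ) : Finset V := Finset.univ.filter (fun x => σ x ≠ τ x)

/-- The expected number of spin-flips per update of the Glauber dynamics,
`E^G_β[|D_{σ,X_σ}|] = Σ_τ |D_{σ,τ}| P^G_β(σ,τ)`. -/
noncomputable def EG (J : V → V → ℝ) (h : V → ℝ) (β : ℝ) (σ : V → ℤˣ) : ℝ :=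
  ∑ τ : V → ℤˣ, ((Dset σ τ).card : ℝ) * PG J h β σ τ

/-- The expected number of spin-flips per update of the SCA dynamics,
`E^SCA_{β,q}[|D_{σ,X_σ}|] = Σ_τ |D_{σ,τ}| P^SCA_{β,q}(σ,τ)`. -/
noncomputable def ESCA (J : V → V → ℝ) (h : V → ℝ) (β q : ℝ) (σ : V → ℤˣ) : ℝ :=
  ∑ τ : V → ℤˣ, ((Dset σ τ).card : ℝ) * PSCA J h β q σ τ

/-- `v = Σ_{{x,y} : x≠y} J_{x,y}² + Σ_x h_x²`, the sum over unordered pairs of distinct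
vertices written as `(1/2)·Σ_{x≠y} J_{x,y}²`. -/
noncomputable def vtot (J : V → V → ℝ) (h : V → ℝ) : ℝ :=
  (1 / 2) * ∑ x, ∑ y ∈ Finset.univ.filter (fun y => y ≠ x), (J x y) ^ 2 + ∑ x, (h x) ^ 2

private lemma units_sum' (f : ℤˣ → ℝ) : ∑ s : ℤˣ, f s = f 1 + f (-1) := by
  have : (Finset.univ : Finset ℤˣ) = {1, -1} := by decide
  rw [this, Finset.sum_insert (by decide), Finset.sum_singleton]

private lemma units_ne_iff' : ∀ u s : ℤˣ, (u ≠ s ↔ s = -u) := by decide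

private lemma sp_sq' (σ : V → ℤˣ) (x : V) : sp σ x * sp σ x = 1 := by
  rcases Int.units_eq_one_or (σ x) with h | h <;> simp [sp, h]

private lemma exponent_eq' (J : V → V → ℝ) (h : V → ℝ) (β q : ℝ)
    (hJ : ∀ x y, J x y = J y x) (σ τ : V → ℤˣ) :
    -β * Ham2 J h σ τ + q * ∑ x, sp σ x * sp τ x
      = ∑ x, ((β/2) * h x * sp σ x + ((β/2) * cavity J h σ x + q * sp σ x) * sp τ x) := by
  have swap : ∑ x, ∑ y, J x y * sp σ x * sp τ y
      = ∑ x, (∑ y, J x y * sp σ y) * sp τ x := by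
    rw [Finset.sum_comm]
    refine Finset.sum_congr rfl fun y _ => ?_
    rw [Finset.sum_mul]
    exact Finset.sum_congr rfl fun x _ => by rw [hJ x y]
  simp only [Ham2, cavity]
  rw [swap]
  simp only [mul_add, add_mul, mul_sub, sub_eq_add_neg, neg_mul, Finset.mul_sum,
    Finset.sum_add_distrib]
  ring_nf
  simp only [Finset.mul_sum, Finset.sum_mul]
  ring_nf


/-- the expected number of spin-flips per update of the SCA dynamics is
`E^SCA_{β,q}[|D_{σ,X_σ}|] = Σ_x (e^{β h̃_x(σ) σ_x + 2q} + 1)⁻¹`. -/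
theorem sca_expected_flips
    (J : V → V → ℝ) (h : V → ℝ) (β q : ℝ) (hβ : 0 ≤ β) (hq : 0 ≤ q)
    (hJ : ∀ x y, J x y = J y x) (hJ0 : ∀ x, J x x = 0) :
    ∀ σ : V → ℤˣ,
      ESCA J h β q σ =
        ∑ x, (Real.exp (β * cavity J h σ x * sp σ x + 2 * q) + 1)⁻¹ := by
  intro σ
  set a : V → ℝ := fun x => (β/2) * cavity J h σ x + q * sp σ x with ha
  set c : V → ℝ := fun x => (β/2) * h x * sp σ x with hc
  set g : V → ℤˣ → ℝ := fun x s => Real.exp (c x + a x * ((s : ℤ) : ℝ)) with hg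
  set S : V → ℝ := fun x => ∑ s : ℤˣ, g x s with hS
  have hgpos : ∀ x s, 0 < g x s := fun x s => Real.exp_pos _
  have hSpos : ∀ x, 0 < S x := fun x => by
    rw [hS]; exact Finset.sum_pos (fun s _ => hgpos x s) ⟨1, Finset.mem_univ 1⟩
  have hw : ∀ τ : V → ℤˣ, Real.exp (-β * Ham2 J h σ τ + q * ∑ x, sp σ x * sp τ x)
      = ∏ x, g x (τ x) := by
    intro τ
    rw [exponent_eq' J h β q hJ σ τ, Real.exp_sum]
    rfl
  have hW : wSCA J h β q σ = ∏ x, S x := by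
    rw [wSCA]
    simp only [hw]
    rw [← Fintype.piFinset_univ, ← Finset.prod_univ_sum]
  have hWpos : 0 < wSCA J h β q σ := by
    rw [hW]; exact Finset.prod_pos fun x _ => hSpos x
  have hflip : ∀ x : V, ∑ τ : V → ℤˣ, (if σ x ≠ τ x then (1:ℝ) else 0) * ∏ y, g y (τ y)
      = g x (-(σ x)) * ∏ y ∈ Finset.univ.erase x, S y := by
    intro x
    have hset : (Finset.univ.filter (fun τ : V → ℤˣ => σ x ≠ τ x))
        = Fintype.piFinset (fun y => if y = x then ({-(σ x)} : Finset ℤˣ) else Finset.univ) := by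
      ext τ
      simp only [Finset.mem_filter, Finset.mem_univ, true_and, Fintype.mem_piFinset]
      rw [units_ne_iff']
      constructor
      · intro hτ y
        by_cases hy : y = x
        · subst hy; simp [hτ]
        · rw [if_neg hy]; exact Finset.mem_univ _
      · intro hτ
        have := hτ x
        simpa using this
    calc ∑ τ : V → ℤˣ, (if σ x ≠ τ x then (1:ℝ) else 0) * ∏ y, g y (τ y)
        = ∑ τ ∈ Finset.univ.filter (fun τ : V → ℤˣ => σ x ≠ τ x), ∏ y, g y (τ y) := by
          rw [Finset.sum_filter]
          exact Finset.sum_congr rfl fun τ _ => by rw [ite_mul, one_mul, zero_mul]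
      _ = ∏ y, ∑ s ∈ (if y = x then ({-(σ x)} : Finset ℤˣ) else Finset.univ), g y s := by
          rw [hset, ← Finset.prod_univ_sum]
      _ = g x (-(σ x)) * ∏ y ∈ Finset.univ.erase x, S y := by
          rw [← Finset.mul_prod_erase Finset.univ _ (Finset.mem_univ x)]
          congr 1
          · simp
          · exact Finset.prod_congr rfl fun y hy => by
              rw [if_neg (Finset.ne_of_mem_erase hy)]
  have hcard : ∀ τ : V → ℤˣ, ((Dset σ τ).card : ℝ)
      = ∑ x, if σ x ≠ τ x then (1:ℝ) else 0 := by
    intro τ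
    simp [Dset, Finset.card_filter]
  calc ESCA J h β q σ
      = ∑ τ : V → ℤˣ, ∑ x, (if σ x ≠ τ x then (1:ℝ) else 0)
          * ((∏ y, g y (τ y)) / wSCA J h β q σ) := by
        rw [ESCA]
        refine Finset.sum_congr rfl fun τ _ => ?_
        rw [PSCA, hw τ, hcard τ, Finset.sum_mul]
    _ = ∑ x, ∑ τ : V → ℤˣ, (if σ x ≠ τ x then (1:ℝ) else 0)
          * ((∏ y, g y (τ y)) / wSCA J h β q σ) := Finset.sum_comm
    _ = ∑ x, (∑ τ : V → ℤˣ, (if σ x ≠ τ x then (1:ℝ) else 0) * ∏ y, g y (τ y))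
          / wSCA J h β q σ := by
        refine Finset.sum_congr rfl fun x _ => ?_
        rw [Finset.sum_div]
        exact Finset.sum_congr rfl fun τ _ => (mul_div_assoc _ _ _).symm
    _ = ∑ x, (Real.exp (β * cavity J h σ x * sp σ x + 2 * q) + 1)⁻¹ := by
        refine Finset.sum_congr rfl fun x _ => ?_
        rw [hflip x, hW, ← Finset.mul_prod_erase Finset.univ S (Finset.mem_univ x),
          mul_comm (g x (-(σ x))) _, mul_comm (S x) _, mul_div_mul_left _ _
          (ne_of_gt (Finset.prod_pos fun y (_ : y ∈ Finset.univ.erase x) => hSpos y))]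
        have hsq := sp_sq' σ x
        have hgm : g x (-(σ x)) = Real.exp (c x - a x * sp σ x) := by
          simp only [hg]
          congr 1
          push_cast [sp]
          ring
        have hgp : g x (σ x) = Real.exp (c x + a x * sp σ x) := rfl
        have hSx : S x = g x (σ x) + g x (-(σ x)) := by
          have : S x = ∑ s : ℤˣ, g x s := rfl
          rw [this, units_sum']
          rcases Int.units_eq_one_or (σ x) with h1 | h1 <;> rw [h1]
          rw [neg_neg]; exact add_comm _ _
        have key : g x (σ x) + g x (-(σ x))
            = (Real.exp (β * cavity J h σ x * sp σ x + 2 * q) + 1) * g x (-(σ x)) := by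
          have e : Real.exp (β * cavity J h σ x * sp σ x + 2 * q) * g x (-(σ x))
              = g x (σ x) := by
            rw [hgm, hgp, ← Real.exp_add]
            congr 1
            simp only [ha, hc]
            linear_combination (-2*q) * hsq
          linear_combination -e
        rw [hSx, key, mul_comm (Real.exp (β * cavity J h σ x * sp σ x + 2 * q) + 1)
          (g x (-(σ x))), div_mul_eq_div_div, div_self (ne_of_gt (hgpos x _)), one_div]
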